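/- arXiv:2102.08883 — 2 statements merged into one kernel-verified Lean document; each statement's English description precedes it below -/
import Mathlib

section
/- Let X and Y be normed spaces and T_k ∈ B(X,Y). The summing operator S : M^∞_R(∑_k T_k) → Y defined by S(x) = R-lim of the Riesz means of the partial sums of ∑_k T_k x_k (the Riesz sum of the series ∑_k T_k x_k) is a bounded linear operator if and only if ∑_k T_k is c_0(X)-multiplier Cauchy. -/
open Filter Finset Topology BoundedContinuousFunction

/-- A series `∑ s k` is Riesz convergent to `l` (w.r.t. weights `r`) if the Riesz
means of its partial sums converge in norm to `l`. -/
def RieszSeriesConvTo {Y : Type*} [NormedAddCommGroup Y] [NormedSpace ℝ Y]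
    (r : ℕ → ℝ) (s : ℕ → Y) (l : Y) : Prop :=
  Tendsto (fun n => (∑ k ∈ Finset.range (n + 1), r k)⁻¹ •
      ∑ k ∈ Finset.range (n + 1), r k • (∑ j ∈ Finset.range (k + 1), s j))
    atTop (𝓝 l)

lemma riesz_regular {Y : Type*} [NormedAddCommGroup Y] [NormedSpace ℝ Y]
    (r : ℕ → ℝ) (hr0 : 0 < r 0) (hr : ∀ k, 0 ≤ r k)
    (hR : Tendsto (fun n => ∑ k ∈ Finset.range n, r k) atTop atTop)
    (s : ℕ → Y) (N : ℕ) (hs : ∀ j, N ≤ j → s j = 0) :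
    RieszSeriesConvTo r s (∑ j ∈ Finset.range N, s j) := by
  set L : Y := ∑ j ∈ Finset.range N, s j with hL
  set R : ℕ → ℝ := fun n => ∑ k ∈ Finset.range (n + 1), r k with hRdef
  set p : ℕ → Y := fun k => ∑ j ∈ Finset.range (k + 1), s j with hp
  have hRpos : ∀ n, 0 < R n := by
    intro n
    have : r 0 ≤ R n := Finset.single_le_sum (f := r) (fun k _ => hr k)
      (Finset.mem_range.2 (Nat.succ_pos n))
    linarith
  have hpL : ∀ k, N ≤ k → p k = L := by
    intro k hk
    have : ∀ j ∈ Finset.range (k + 1), j ∉ Finset.range N → s j = 0 := by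
      intro j _ hj
      exact hs j (le_of_not_gt (fun h => hj (Finset.mem_range.2 h)))
    exact (Finset.sum_subset (Finset.range_subset_range.2 (by omega)) this).symm
  set E : Y := ∑ k ∈ Finset.range N, r k • (p k - L) with hE
  have key : ∀ n, N ≤ n → (R n)⁻¹ •
      (∑ k ∈ Finset.range (n + 1), r k • p k) = L + (R n)⁻¹ • E := by
    intro n hn
    have h1 : ∑ k ∈ Finset.range (n + 1), r k • p k
        = R n • L + ∑ k ∈ Finset.range (n + 1), r k • (p k - L) := by
      rw [hRdef, Finset.sum_smul]
      rw [← Finset.sum_add_distrib]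
      apply Finset.sum_congr rfl
      intro k _
      rw [smul_sub]; abel
    have h2 : ∑ k ∈ Finset.range (n + 1), r k • (p k - L) = E := by
      rw [hE]
      apply (Finset.sum_subset (Finset.range_subset_range.2 (by omega)) _).symm
      intro k _ hk
      have hk' : N ≤ k := le_of_not_gt (fun h => hk (Finset.mem_range.2 h))
      rw [hpL k hk', sub_self, smul_zero]
    rw [h1, h2, smul_add, smul_smul, inv_mul_cancel₀ (hRpos n).ne', one_smul]
  have hRtop : Tendsto R atTop atTop := hR.comp (tendsto_add_atTop_nat 1)
  have hRinv : Tendsto (fun n => (R n)⁻¹) atTop (𝓝 0) :=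
    tendsto_inv_atTop_zero.comp hRtop
  have hlim : Tendsto (fun n => L + (R n)⁻¹ • E) atTop (𝓝 L) := by
    have : Tendsto (fun n => (R n)⁻¹ • E) atTop (𝓝 (0 : Y)) := by
      simpa using hRinv.smul_const E
    simpa using tendsto_const_nhds.add this
  unfold RieszSeriesConvTo
  apply hlim.congr'
  filter_upwards [eventually_ge_atTop N] with n hn
  exact (key n hn).symm

lemma blocks_bounded {X Y : Type*} [NormedAddCommGroup X] [NormedSpace ℝ X]
    [NormedAddCommGroup Y] [NormedSpace ℝ Y] (T : ℕ → X →L[ℝ] Y)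
    (h : ∀ x : ℕ → X, Tendsto x atTop (𝓝 0) →
        CauchySeq (fun n => ∑ k ∈ Finset.range n, T k (x k))) :
    ∃ C > 0, ∀ m n : ℕ, ∀ x : ℕ → X, (∀ k, ‖x k‖ ≤ 1) →
      ‖∑ k ∈ Finset.Ico m n, T k (x k)‖ ≤ C := by
  by_contra hcon
  push_neg at hcon
  -- from ¬∃C>0..., get: for every C, a bad block
  have hbad : ∀ C : ℝ, ∃ m n : ℕ, ∃ x : ℕ → X, (∀ k, ‖x k‖ ≤ 1) ∧
      C < ‖∑ k ∈ Finset.Ico m n, T k (x k)‖ := by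
    intro C
    obtain ⟨m, n, x, hx, hC⟩ := hcon (max C 1) (lt_of_lt_of_le one_pos (le_max_right C 1))
    exact ⟨m, n, x, hx, lt_of_le_of_lt (le_max_left C 1) hC⟩
  -- bad blocks can be chosen to start beyond any a
  have hbad' : ∀ (a : ℕ) (M : ℝ), 0 ≤ M → ∃ p : ℕ × ℕ × (ℕ → X),
      a ≤ p.1 ∧ (∀ k, ‖p.2.2 k‖ ≤ 1) ∧
      M < ‖∑ k ∈ Finset.Ico p.1 p.2.1, T k (p.2.2 k)‖ := by
    intro a M hM
    set H : ℝ := ∑ k ∈ Finset.range a, ‖T k‖ with hH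
    have hH0 : 0 ≤ H := Finset.sum_nonneg (fun k _ => norm_nonneg _)
    obtain ⟨m, n, x, hx, hMH⟩ := hbad (M + H)
    have hhead : ∀ u v : ℕ, v ≤ a → ‖∑ k ∈ Finset.Ico u v, T k (x k)‖ ≤ H := by
      intro u v hv
      calc ‖∑ k ∈ Finset.Ico u v, T k (x k)‖
          ≤ ∑ k ∈ Finset.Ico u v, ‖T k (x k)‖ := norm_sum_le _ _
        _ ≤ ∑ k ∈ Finset.Ico u v, ‖T k‖ := by
            apply Finset.sum_le_sum
            intro k _
            calc ‖T k (x k)‖ ≤ ‖T k‖ * ‖x k‖ := (T k).le_opNorm _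
              _ ≤ ‖T k‖ * 1 := by
                  exact mul_le_mul_of_nonneg_left (hx k) (norm_nonneg _)
              _ = ‖T k‖ := mul_one _
        _ ≤ H := by
            rw [hH]
            apply Finset.sum_le_sum_of_subset_of_nonneg
            · intro k hk
              have := Finset.mem_Ico.1 hk
              exact Finset.mem_range.2 (by omega)
            · intro k _ _; exact norm_nonneg _
    by_cases hma : a ≤ m
    · exact ⟨(m, n, x), hma, hx, lt_of_le_of_lt (by linarith) hMH⟩
    · -- m < a; split the sum at a
      push_neg at hma
      by_cases hna : n ≤ a
      · exfalso
        have := hhead m n hna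
        linarith
      · push_neg at hna
        refine ⟨(a, n, x), le_refl a, hx, ?_⟩
        have hsplit : ∑ k ∈ Finset.Ico m n, T k (x k)
            = ∑ k ∈ Finset.Ico m a, T k (x k) + ∑ k ∈ Finset.Ico a n, T k (x k) :=
          (Finset.sum_Ico_consecutive _ hma.le hna.le).symm
        have h1 := hhead m a (le_refl a)
        have h2 : ‖∑ k ∈ Finset.Ico m n, T k (x k)‖
            ≤ H + ‖∑ k ∈ Finset.Ico a n, T k (x k)‖ := by
          rw [hsplit]
          exact le_trans (norm_add_le _ _) (by linarith [h1])
        linarith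
  -- recursively choose blocks
  set F : ℕ → ℕ × ℕ × (ℕ → X) := fun j => Nat.rec
    ((hbad' 0 1 zero_le_one).choose)
    (fun j prev => (hbad' (max prev.2.1 (j + 1)) ((j : ℝ) + 2)
      (by positivity)).choose) j with hF
  set a : ℕ → ℕ := fun j => (F j).1 with ha
  set b : ℕ → ℕ := fun j => (F j).2.1 with hb
  set ξ : ℕ → ℕ → X := fun j => (F j).2.2 with hξ
  have hF0 : F 0 = (hbad' 0 1 zero_le_one).choose := rfl
  have hFs : ∀ j, F (j + 1) = (hbad' (max (b j) (j + 1)) ((j : ℝ) + 2)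
      (by positivity)).choose := fun j => rfl
  have hunit : ∀ j k, ‖ξ j k‖ ≤ 1 := by
    intro j
    cases j with
    | zero => exact (hbad' 0 1 zero_le_one).choose_spec.2.1
    | succ i => exact (hbad' (max (b i) (i + 1)) ((i : ℝ) + 2)
        (by positivity)).choose_spec.2.1
  have hblock : ∀ j : ℕ, ((j : ℝ) + 1) < ‖∑ k ∈ Finset.Ico (a j) (b j), T k (ξ j k)‖ := by
    intro j
    cases j with
    | zero =>
        have := (hbad' 0 1 zero_le_one).choose_spec.2.2
        have h0 : ((0:ℕ):ℝ) + 1 = 1 := by norm_num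
        rw [h0]
        exact this
    | succ i =>
        have := (hbad' (max (b i) (i + 1)) ((i : ℝ) + 2)
          (by positivity)).choose_spec.2.2
        have heq : ((i : ℝ) + 1 + 1) = (i : ℝ) + 2 := by ring
        rw [show ((i + 1 : ℕ) : ℝ) = (i : ℝ) + 1 by push_cast; ring, heq]
        exact this
  have hstart : ∀ j, max (b j) (j + 1) ≤ a (j + 1) := by
    intro j
    exact (hbad' (max (b j) (j + 1)) ((j : ℝ) + 2) (by positivity)).choose_spec.1
  have hja : ∀ j, j ≤ a j := by
    intro j
    cases j with
    | zero => exact Nat.zero_le _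
    | succ i => exact le_trans (le_max_right _ _) (hstart i)
  have hab : ∀ j, a j < b j := by
    intro j
    by_contra hc
    push_neg at hc
    have : Finset.Ico (a j) (b j) = ∅ := Finset.Ico_eq_empty (by omega)
    have hb0 := hblock j
    rw [this] at hb0
    simp at hb0
    have : (0:ℝ) ≤ (j:ℝ) := Nat.cast_nonneg j
    linarith
  have hmono : ∀ j i, i < j → b i ≤ a j := by
    intro j
    induction j with
    | zero => intro i hi; omega
    | succ m ih =>
        intro i hij
        rcases Nat.lt_succ_iff_lt_or_eq.1 hij with h | h
        · exact le_trans (ih i h) (le_trans (hab m).le (le_trans (le_max_left _ _) (hstart m)))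
        · rw [h]
          exact le_trans (le_max_left _ _) (hstart m)
  -- the gliding hump sequence
  set x : ℕ → X := fun k => ∑ j ∈ Finset.range (k + 1),
    (if k ∈ Finset.Ico (a j) (b j) then ((j : ℝ) + 1)⁻¹ • ξ j k else 0) with hx
  have hxval : ∀ j k, k ∈ Finset.Ico (a j) (b j) → x k = ((j : ℝ) + 1)⁻¹ • ξ j k := by
    intro j k hk
    have hkIco := Finset.mem_Ico.1 hk
    have hjk : j ∈ Finset.range (k + 1) :=
      Finset.mem_range.2 (by have := hja j; omega)
    simp only [hx]
    rw [Finset.sum_eq_single j]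
    · rw [if_pos hk]
    · intro i _ hij
      rw [if_neg]
      intro hki
      have hkiIco := Finset.mem_Ico.1 hki
      rcases lt_or_gt_of_ne hij with h | h
      · have := hmono j i h; omega
      · have := hmono i j h; omega
    · intro hj; exact absurd hjk hj
  have hxzero : ∀ k, (∀ j, k ∉ Finset.Ico (a j) (b j)) → x k = 0 := by
    intro k hk
    simp only [hx]
    apply Finset.sum_eq_zero
    intro j _
    rw [if_neg (hk j)]
  -- x is null
  have hxnull : Tendsto x atTop (𝓝 0) := by
    rw [Metric.tendsto_atTop]
    intro ε hε
    obtain ⟨J, hJ⟩ := exists_nat_gt (1 / ε)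
    refine ⟨b J, fun k hk => ?_⟩
    rw [dist_zero_right]
    by_cases hmem : ∃ j, k ∈ Finset.Ico (a j) (b j)
    · obtain ⟨j, hj⟩ := hmem
      have hjJ : J < j := by
        by_contra hc
        push_neg at hc
        have hkIco := Finset.mem_Ico.1 hj
        rcases Nat.lt_or_ge j J with h | h
        · have := hmono J j h
          have := hab J
          omega
        · have hjeq : j = J := by omega
          subst hjeq
          omega
      rw [hxval j k hj]
      rw [norm_smul]
      have h1 : ‖((j : ℝ) + 1)⁻¹‖ = ((j : ℝ) + 1)⁻¹ := by
        rw [Real.norm_eq_abs, abs_of_pos]; positivity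
      rw [h1]
      have h2 : ((j : ℝ) + 1)⁻¹ * ‖ξ j k‖ ≤ ((j : ℝ) + 1)⁻¹ := by
        have := hunit j k
        have h3 : (0:ℝ) < (j:ℝ) + 1 := by positivity
        calc ((j : ℝ) + 1)⁻¹ * ‖ξ j k‖ ≤ ((j : ℝ) + 1)⁻¹ * 1 :=
              mul_le_mul_of_nonneg_left this (by positivity)
          _ = ((j : ℝ) + 1)⁻¹ := mul_one _
      have h4 : ((j : ℝ) + 1)⁻¹ < ε := by
        have hJj : 1 / ε < (j : ℝ) + 1 := by
          have : (J : ℝ) ≤ (j : ℝ) := by exact_mod_cast Nat.le_of_lt hjJ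
          linarith
        have h5 := one_div_lt_one_div_of_lt (by positivity : (0:ℝ) < 1/ε) hJj
        rwa [one_div_one_div, one_div] at h5
      linarith
    · push_neg at hmem
      rw [hxzero k hmem]
      simpa using hε
  -- non-Cauchy
  have hnc := h x hxnull
  rw [Metric.cauchySeq_iff] at hnc
  obtain ⟨N, hN⟩ := hnc 1 one_pos
  have haN : N ≤ a N := hja N
  have hbN : N ≤ b N := le_trans haN (hab N).le
  have hdist := hN (b N) hbN (a N) haN
  rw [dist_eq_norm] at hdist
  have hsum : (∑ k ∈ Finset.range (b N), T k (x k)) - ∑ k ∈ Finset.range (a N), T k (x k)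
      = ∑ k ∈ Finset.Ico (a N) (b N), T k (x k) :=
    (Finset.sum_Ico_eq_sub _ (hab N).le).symm
  rw [hsum] at hdist
  have heq : ∑ k ∈ Finset.Ico (a N) (b N), T k (x k)
      = ((N : ℝ) + 1)⁻¹ • ∑ k ∈ Finset.Ico (a N) (b N), T k (ξ N k) := by
    rw [Finset.smul_sum]
    apply Finset.sum_congr rfl
    intro k hk
    rw [hxval N k hk, map_smul]
  rw [heq, norm_smul] at hdist
  have h1 : ‖((N : ℝ) + 1)⁻¹‖ = ((N : ℝ) + 1)⁻¹ := by
    rw [Real.norm_eq_abs, abs_of_pos]; positivity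
  rw [h1] at hdist
  have h2 := hblock N
  have h3 : (0:ℝ) < (N:ℝ) + 1 := by positivity
  have h4 : (1:ℝ) < ((N : ℝ) + 1)⁻¹ * ‖∑ k ∈ Finset.Ico (a N) (b N), T k (ξ N k)‖ := by
    have := mul_lt_mul_of_pos_left h2 (by positivity : (0:ℝ) < ((N:ℝ)+1)⁻¹)
    rwa [inv_mul_cancel₀ h3.ne'] at this
  linarith

/-- The summing operator `S : M^∞_R(∑ T k) → Y`, `S x = R-∑ T k x k`, is bounded
(continuous) iff `∑ T k` is `c₀(X)`-multiplier Cauchy. -/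
theorem summing_operator_continuous_iff_c0_multiplier_cauchy
    {X Y : Type*} [NormedAddCommGroup X] [NormedSpace ℝ X]
    [NormedAddCommGroup Y] [NormedSpace ℝ Y]
    (r : ℕ → ℝ) (hr0 : 0 < r 0) (hr : ∀ k, 0 ≤ r k)
    (hR : Tendsto (fun n => ∑ k ∈ Finset.range n, r k) atTop atTop)
    (T : ℕ → X →L[ℝ] Y) :
    (∃ C > 0, ∀ f : ℕ →ᵇ X, ∀ y : Y,
        RieszSeriesConvTo r (fun k => T k (f k)) y → ‖y‖ ≤ C * ‖f‖) ↔
    (∀ x : ℕ → X, Tendsto x atTop (𝓝 0) →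
        CauchySeq (fun n => ∑ k ∈ Finset.range n, T k (x k))) := by
  constructor
  · intro h

    obtain ⟨C, hCpos, hC⟩ := h
    intro x hx
    rw [Metric.cauchySeq_iff']
    intro ε hε
    have hε2 : 0 < ε / (2 * C) := by positivity
    obtain ⟨N, hN⟩ := (Metric.tendsto_atTop.1 hx) (ε / (2 * C)) hε2
    refine ⟨N, fun n hn => ?_⟩
    -- define the bounded function f supported on Ico N n
    set g : ℕ → X := fun k => if k ∈ Finset.Ico N n then x k else 0 with hg
    have hgb : ∀ k, ‖g k‖ ≤ ε / (2 * C) := by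
      intro k
      by_cases hk : k ∈ Finset.Ico N n
      · have := hN k (Finset.mem_Ico.1 hk).1
        rw [dist_zero_right] at this
        simp only [hg, if_pos hk]
        exact this.le
      · simp only [hg]
        rw [if_neg hk]
        simp [hε2.le]
    set f : ℕ →ᵇ X := BoundedContinuousFunction.ofNormedAddCommGroup g
      (continuous_of_discreteTopology) (ε / (2 * C)) hgb with hf
    have hfnorm : ‖f‖ ≤ ε / (2 * C) :=
      BoundedContinuousFunction.norm_ofNormedAddCommGroup_le continuous_of_discreteTopology hε2.le hgb
    have hsupp : ∀ j, n ≤ j → T j (f j) = 0 := by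
      intro j hj
      have : f j = 0 := by
        show g j = 0
        rw [hg]
        simp only [Finset.mem_Ico]
        rw [if_neg (by omega)]
      rw [this, map_zero]
    have hconv := riesz_regular r hr0 hr hR (fun k => T k (f k)) n hsupp
    have hyval : (∑ j ∈ Finset.range n, T j (f j))
        = ∑ k ∈ Finset.range n, T k (x k) - ∑ k ∈ Finset.range N, T k (x k) := by
      have h1 : ∀ j ∈ Finset.range n, T j (f j)
          = if j ∈ Finset.Ico N n then T j (x j) else 0 := by
        intro j _
        show T j (g j) = _
        by_cases hk : j ∈ Finset.Ico N n
        · simp only [hg]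
          rw [if_pos hk, if_pos hk]
        · simp only [hg]
          rw [if_neg hk, if_neg hk, map_zero]
      rw [Finset.sum_congr rfl h1, Finset.sum_ite_mem]
      have hsub : Finset.range n ∩ Finset.Ico N n = Finset.Ico N n := by
        apply Finset.inter_eq_right.2
        intro k hk
        exact Finset.mem_range.2 (Finset.mem_Ico.1 hk).2
      rw [hsub, Finset.sum_Ico_eq_sub _ hn]
    rw [hyval] at hconv
    have hbound := hC f _ hconv
    rw [dist_eq_norm]
    calc ‖∑ k ∈ Finset.range n, T k (x k) - ∑ k ∈ Finset.range N, T k (x k)‖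
        ≤ C * ‖f‖ := hbound
      _ ≤ C * (ε / (2 * C)) := by
          exact mul_le_mul_of_nonneg_left hfnorm hCpos.le
      _ = ε / 2 := by field_simp
      _ < ε := by linarith
  · intro h
    obtain ⟨C, hCpos, hC⟩ := blocks_bounded T h
    refine ⟨C, hCpos, fun f y hconv => ?_⟩
    -- partial sums are bounded by C * ‖f‖
    have hp : ∀ n : ℕ, ‖∑ j ∈ Finset.range n, T j (f j)‖ ≤ C * ‖f‖ := by
      intro n
      by_cases hf0 : ‖f‖ = 0
      · have : f = 0 := norm_eq_zero.1 hf0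
        subst this
        simp
      · have hfpos : 0 < ‖f‖ := lt_of_le_of_ne (norm_nonneg f) (Ne.symm hf0)
        set x : ℕ → X := fun j => ‖f‖⁻¹ • f j with hxdef
        have hx1 : ∀ j, ‖x j‖ ≤ 1 := by
          intro j
          rw [hxdef]
          simp only [norm_smul, norm_inv, norm_norm]
          rw [inv_mul_le_iff₀ hfpos, mul_one]
          exact f.norm_coe_le_norm j
        have := hC 0 n x hx1
        rw [← Finset.range_eq_Ico] at this
        have heq : ∑ j ∈ Finset.range n, T j (x j)
            = ‖f‖⁻¹ • ∑ j ∈ Finset.range n, T j (f j) := by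
          rw [Finset.smul_sum]
          exact Finset.sum_congr rfl (fun j _ => by rw [hxdef]; exact map_smul _ _ _)
        rw [heq, norm_smul, norm_inv, norm_norm, inv_mul_le_iff₀ hfpos] at this
        rw [mul_comm ‖f‖ C] at this
        exact this
    -- Riesz means are bounded by C * ‖f‖
    have hmean : ∀ n : ℕ, ‖(∑ k ∈ Finset.range (n + 1), r k)⁻¹ •
        ∑ k ∈ Finset.range (n + 1), r k •
          (∑ j ∈ Finset.range (k + 1), T j (f j))‖ ≤ C * ‖f‖ := by
      intro n
      set R : ℝ := ∑ k ∈ Finset.range (n + 1), r k with hRdef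
      have hRpos : 0 < R := by
        have : r 0 ≤ R := Finset.single_le_sum (f := r) (fun k _ => hr k)
          (Finset.mem_range.2 (Nat.succ_pos n))
        linarith
      have h1 : ‖∑ k ∈ Finset.range (n + 1), r k •
          (∑ j ∈ Finset.range (k + 1), T j (f j))‖ ≤ R * (C * ‖f‖) := by
        calc ‖∑ k ∈ Finset.range (n + 1), r k •
              (∑ j ∈ Finset.range (k + 1), T j (f j))‖
            ≤ ∑ k ∈ Finset.range (n + 1), ‖r k •
              (∑ j ∈ Finset.range (k + 1), T j (f j))‖ := norm_sum_le _ _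
          _ ≤ ∑ k ∈ Finset.range (n + 1), r k * (C * ‖f‖) := by
              apply Finset.sum_le_sum
              intro k _
              rw [norm_smul, Real.norm_eq_abs, abs_of_nonneg (hr k)]
              exact mul_le_mul_of_nonneg_left (hp (k + 1)) (hr k)
          _ = R * (C * ‖f‖) := by rw [hRdef, ← Finset.sum_mul]
      calc ‖R⁻¹ • ∑ k ∈ Finset.range (n + 1), r k •
            (∑ j ∈ Finset.range (k + 1), T j (f j))‖
          = R⁻¹ * ‖∑ k ∈ Finset.range (n + 1), r k •
            (∑ j ∈ Finset.range (k + 1), T j (f j))‖ := by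
            rw [norm_smul, Real.norm_eq_abs, abs_of_pos (inv_pos.2 hRpos)]
        _ ≤ R⁻¹ * (R * (C * ‖f‖)) :=
            mul_le_mul_of_nonneg_left h1 (inv_pos.2 hRpos).le
        _ = C * ‖f‖ := by field_simp
    exact le_of_tendsto' hconv.norm hmean
end

section
/- Let X and Y be normed spaces and T_k ∈ B(X,Y). The weak summing operator S : M^∞_{wR}(∑_k T_k) → Y, assigning to each x the weak Riesz sum of ∑_k T_k x_k, is a bounded linear operator if and only if ∑_k T_k is c_0(X)-multiplier Cauchy. -/
open Filter Finset Topology BoundedContinuousFunction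

/-- A series `∑ s k` is weakly Riesz convergent to `l` if for every continuous
linear functional `φ`, the Riesz means of `φ` of the partial sums tend to `φ l`. -/
def WeakRieszSeriesConvTo {Y : Type*} [NormedAddCommGroup Y] [NormedSpace ℝ Y]
    (r : ℕ → ℝ) (s : ℕ → Y) (l : Y) : Prop :=
  ∀ φ : Y →L[ℝ] ℝ,
    Tendsto (fun n => (∑ k ∈ Finset.range (n + 1), r k)⁻¹ *
        ∑ k ∈ Finset.range (n + 1), r k * φ (∑ j ∈ Finset.range (k + 1), s j))
      atTop (𝓝 (φ l))

lemma Rpos (r : ℕ → ℝ) (hr0 : 0 < r 0) (hr : ∀ k, 0 ≤ r k) (n : ℕ) :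
    0 < ∑ k ∈ Finset.range (n + 1), r k := by
  have h := Finset.single_le_sum (f := r) (fun k _ => hr k)
    (Finset.mem_range.2 (Nat.succ_pos n))
  linarith
lemma riesz_mean_const (r : ℕ → ℝ) (hr0 : 0 < r 0) (hr : ∀ k, 0 ≤ r k)
    (hR : Tendsto (fun n => ∑ k ∈ Finset.range n, r k) atTop atTop)
    (a : ℕ → ℝ) (c : ℝ) (n₀ : ℕ) (ha : ∀ k, n₀ ≤ k → a k = c) :
    Tendsto (fun n => (∑ k ∈ Finset.range (n + 1), r k)⁻¹ *
        ∑ k ∈ Finset.range (n + 1), r k * a k) atTop (𝓝 c) := by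
  set R : ℕ → ℝ := fun n => ∑ k ∈ Finset.range (n + 1), r k with hRdef
  have hRpos : ∀ n, 0 < R n := Rpos r hr0 hr
  set D : ℝ := ∑ k ∈ Finset.range n₀, r k * (a k - c) with hD
  have hRtop : Tendsto R atTop atTop := hR.comp (tendsto_add_atTop_nat 1)
  have hlim : Tendsto (fun n => c + (R n)⁻¹ * D) atTop (𝓝 c) := by
    have : Tendsto (fun n => (R n)⁻¹) atTop (𝓝 0) :=
      tendsto_inv_atTop_zero.comp hRtop
    have := (this.mul_const D).const_add c
    simpa using this
  refine hlim.congr' ?_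
  filter_upwards [eventually_ge_atTop n₀] with n hn
  have hsplit : ∑ k ∈ Finset.range (n + 1), r k * a k = R n * c + D := by
    have h1 : ∑ k ∈ Finset.range (n + 1), r k * (a k - c) = D := by
      rw [hD]
      refine (Finset.sum_subset (Finset.range_subset_range.2 (by omega)) ?_).symm
      intro k hk hk'
      have : n₀ ≤ k := by simpa using hk'
      rw [ha k this]; ring
    have h2 : ∑ k ∈ Finset.range (n + 1), r k * a k
        = (∑ k ∈ Finset.range (n + 1), r k * (a k - c)) + R n * c := by
      rw [hRdef, Finset.sum_mul, ← Finset.sum_add_distrib]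
      exact Finset.sum_congr rfl (fun k _ => by ring)
    rw [h2, h1]; ring
  rw [hsplit, mul_add, ← mul_assoc, inv_mul_cancel₀ (hRpos n).ne']
  ring
lemma norm_weak_limit_le {Y : Type*} [NormedAddCommGroup Y] [NormedSpace ℝ Y]
    (r : ℕ → ℝ) (hr0 : 0 < r 0) (hr : ∀ k, 0 ≤ r k)
    (s : ℕ → Y) (y0 : Y) (B : ℝ) (hB : 0 ≤ B)
    (hs : ∀ k, ‖∑ j ∈ Finset.range (k + 1), s j‖ ≤ B)
    (hw : WeakRieszSeriesConvTo r s y0) : ‖y0‖ ≤ B := by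
  by_cases h0 : y0 = 0
  · simpa [h0] using hB
  obtain ⟨φ, hφ1, hφx⟩ := exists_dual_vector ℝ y0 (norm_ne_zero_iff.2 h0)
  have hlim := hw φ
  have hmean : ∀ n, (∑ k ∈ Finset.range (n + 1), r k)⁻¹ *
      ∑ k ∈ Finset.range (n + 1), r k * φ (∑ j ∈ Finset.range (k + 1), s j) ≤ B := by
    intro n
    have hRp := Rpos r hr0 hr n
    have hsum : ∑ k ∈ Finset.range (n + 1), r k * φ (∑ j ∈ Finset.range (k + 1), s j)
        ≤ (∑ k ∈ Finset.range (n + 1), r k) * B := by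
      rw [Finset.sum_mul]
      refine Finset.sum_le_sum fun k _ => ?_
      have h1 : φ (∑ j ∈ Finset.range (k + 1), s j) ≤ B := by
        calc φ (∑ j ∈ Finset.range (k + 1), s j)
            ≤ ‖φ (∑ j ∈ Finset.range (k + 1), s j)‖ := le_abs_self _
          _ ≤ ‖φ‖ * ‖∑ j ∈ Finset.range (k + 1), s j‖ := φ.le_opNorm _
          _ ≤ 1 * B := by rw [hφ1]; simpa using hs k
          _ = B := one_mul B
      exact mul_le_mul_of_nonneg_left h1 (hr k)
    calc (∑ k ∈ Finset.range (n + 1), r k)⁻¹ *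
          ∑ k ∈ Finset.range (n + 1), r k * φ (∑ j ∈ Finset.range (k + 1), s j)
        ≤ (∑ k ∈ Finset.range (n + 1), r k)⁻¹ *
          ((∑ k ∈ Finset.range (n + 1), r k) * B) :=
          mul_le_mul_of_nonneg_left hsum (inv_nonneg.2 hRp.le)
      _ = B := by rw [← mul_assoc, inv_mul_cancel₀ hRp.ne']; ring
  have : φ y0 ≤ B := le_of_tendsto hlim (Eventually.of_forall hmean)
  calc ‖y0‖ = φ y0 := by simpa using hφx.symm
    _ ≤ B := this
lemma uniform_bound {X Y : Type*} [NormedAddCommGroup X] [NormedSpace ℝ X]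
    [NormedAddCommGroup Y] [NormedSpace ℝ Y] (T : ℕ → X →L[ℝ] Y)
    (hc : ∀ x : ℕ → X, Tendsto x atTop (𝓝 0) →
        CauchySeq (fun n => ∑ k ∈ Finset.range n, T k (x k))) :
    ∃ C : ℝ, 0 < C ∧ ∀ (n : ℕ) (x : ℕ → X), (∀ k, ‖x k‖ ≤ 1) →
      ‖∑ k ∈ Finset.range n, T k (x k)‖ ≤ C := by
  classical
  by_contra hcon
  push_neg at hcon
  have hub : ∀ C : ℝ, 0 < C → ∃ n, ∃ x : ℕ → X, (∀ k, ‖x k‖ ≤ 1) ∧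
      C < ‖∑ k ∈ Finset.range n, T k (x k)‖ := hcon
  -- substep
  have step : ∀ (N : ℕ) (M : ℝ), 0 < M → ∃ p : ℕ × (ℕ → X), N < p.1 ∧
      (∀ k, ‖p.2 k‖ ≤ 1) ∧ M < ‖∑ k ∈ Finset.Ico N p.1, T k (p.2 k)‖ := by
    intro N M hM
    set H : ℝ := ∑ k ∈ Finset.range N, ‖T k‖ with hH
    have hH0 : 0 ≤ H := Finset.sum_nonneg fun k _ => norm_nonneg _
    obtain ⟨n, x, hx1, hx2⟩ := hub (M + H) (by linarith)
    have hhead : ∀ m, m ≤ N → ‖∑ k ∈ Finset.range m, T k (x k)‖ ≤ H := by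
      intro m hm
      calc ‖∑ k ∈ Finset.range m, T k (x k)‖ ≤ ∑ k ∈ Finset.range m, ‖T k (x k)‖ :=
            norm_sum_le _ _
        _ ≤ ∑ k ∈ Finset.range m, ‖T k‖ := by
            refine Finset.sum_le_sum fun k _ => ?_
            calc ‖T k (x k)‖ ≤ ‖T k‖ * ‖x k‖ := (T k).le_opNorm _
              _ ≤ ‖T k‖ * 1 := by
                  exact mul_le_mul_of_nonneg_left (hx1 k) (norm_nonneg _)
              _ = ‖T k‖ := mul_one _
        _ ≤ H := Finset.sum_le_sum_of_subset_of_nonneg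
              (Finset.range_subset_range.2 hm) (fun k _ _ => norm_nonneg _)
    have hNn : N < n := by
      by_contra hn
      push_neg at hn
      have := hhead n hn
      linarith
    refine ⟨(n, x), hNn, hx1, ?_⟩
    have hsub : ∑ k ∈ Finset.Ico N n, T k (x k)
        = ∑ k ∈ Finset.range n, T k (x k) - ∑ k ∈ Finset.range N, T k (x k) := by
      rw [Finset.sum_Ico_eq_sub _ hNn.le]
    rw [hsub]
    have := norm_sub_norm_le (∑ k ∈ Finset.range n, T k (x k))
      (∑ k ∈ Finset.range N, T k (x k))
    have h2 := hhead N le_rfl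
    linarith
  -- recursive construction
  let g : ℕ → ℕ × (ℕ → X) := fun j =>
    Nat.rec ((0:ℕ), fun _ => (0:X))
      (fun j p => (step p.1 ((j:ℝ)+1) (by positivity)).choose) j
  have hg : ∀ j : ℕ, (g j).1 < (g (j+1)).1 ∧ (∀ k, ‖(g (j+1)).2 k‖ ≤ 1) ∧
      ((j:ℝ)+1) < ‖∑ k ∈ Finset.Ico (g j).1 (g (j+1)).1, T k ((g (j+1)).2 k)‖ :=
    fun j => (step (g j).1 ((j:ℝ)+1) (by positivity)).choose_spec
  have hmono : StrictMono (fun j => (g j).1) := strictMono_nat_of_lt_succ fun j => (hg j).1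
  have hNk : ∀ j, j ≤ (g j).1 := fun j => hmono.le_apply
  have hN0 : (g 0).1 = 0 := rfl
  let idx : ℕ → ℕ := fun k => Nat.findGreatest (fun j => (g j).1 ≤ k) k
  have hidx1 : ∀ k, (g (idx k)).1 ≤ k := by
    intro k
    exact Nat.findGreatest_spec (P := fun j => (g j).1 ≤ k) (m := 0) (Nat.zero_le k) (show (g 0).1 ≤ k from le_of_eq_of_le hN0 (Nat.zero_le k))
  have hidx2 : ∀ k, k < (g (idx k + 1)).1 := by
    intro k
    by_contra h
    push_neg at h
    have hle : idx k + 1 ≤ k := le_trans (hNk _) h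
    have h2 : idx k + 1 ≤ idx k := Nat.le_findGreatest (P := fun j => (g j).1 ≤ k) hle h
    omega
  have hidxe : ∀ j k, (g j).1 ≤ k → k < (g (j+1)).1 → idx k = j := by
    intro j k h1 h2
    have hjk : j ≤ k := le_trans (hNk j) h1
    have hle : j ≤ idx k := Nat.le_findGreatest (P := fun j => (g j).1 ≤ k) hjk h1
    have hge : idx k ≤ j := by
      by_contra h
      push_neg at h
      have : (g (j+1)).1 ≤ (g (idx k)).1 := hmono.monotone h
      have := hidx1 k
      omega
    omega
  have hidxge : ∀ J k, (g J).1 ≤ k → J ≤ idx k := fun J k h =>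
    Nat.le_findGreatest (P := fun j => (g j).1 ≤ k) (le_trans (hNk J) h) h
  -- the null sequence
  let z : ℕ → X := fun k => ((idx k : ℝ) + 1)⁻¹ • (g (idx k + 1)).2 k
  have hznorm : ∀ k, ‖z k‖ ≤ ((idx k : ℝ) + 1)⁻¹ := by
    intro k
    have : ‖(g (idx k + 1)).2 k‖ ≤ 1 := (hg (idx k)).2.1 k
    calc ‖z k‖ = |((idx k : ℝ) + 1)⁻¹| * ‖(g (idx k + 1)).2 k‖ := norm_smul _ _
      _ ≤ |((idx k : ℝ) + 1)⁻¹| * 1 :=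
          mul_le_mul_of_nonneg_left this (abs_nonneg _)
      _ = ((idx k : ℝ) + 1)⁻¹ := by
          rw [mul_one, abs_of_pos (by positivity)]
  have hz0 : Tendsto z atTop (𝓝 0) := by
    rw [Metric.tendsto_atTop]
    intro ε hε
    obtain ⟨J, hJ⟩ := exists_nat_one_div_lt hε
    refine ⟨(g J).1, fun k hk => ?_⟩
    have hJle : J ≤ idx k := hidxge J k hk
    have h1 : ((idx k : ℝ) + 1)⁻¹ ≤ ((J : ℝ) + 1)⁻¹ := by
      apply inv_anti₀ (by positivity)
      exact_mod_cast by omega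
    rw [dist_eq_norm, sub_zero]
    calc ‖z k‖ ≤ ((idx k : ℝ) + 1)⁻¹ := hznorm k
      _ ≤ ((J : ℝ) + 1)⁻¹ := h1
      _ < ε := by rw [← one_div]; exact hJ
  -- contradiction with Cauchy
  have hcz := hc z hz0
  rw [Metric.cauchySeq_iff] at hcz
  obtain ⟨N₀, hN₀⟩ := hcz 1 one_pos
  set j := N₀ with hj
  have hj1 : N₀ ≤ (g j).1 := hNk j
  have hj2 : N₀ ≤ (g (j+1)).1 := le_trans hj1 (hg j).1.le
  have hd := hN₀ (g (j+1)).1 hj2 (g j).1 hj1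
  rw [dist_eq_norm, ← Finset.sum_Ico_eq_sub _ (hg j).1.le] at hd
  -- compute the block sum
  have hblock : ∑ k ∈ Finset.Ico (g j).1 (g (j+1)).1, T k (z k)
      = ((j : ℝ) + 1)⁻¹ • ∑ k ∈ Finset.Ico (g j).1 (g (j+1)).1, T k ((g (j+1)).2 k) := by
    rw [Finset.smul_sum]
    refine Finset.sum_congr rfl fun k hk => ?_
    obtain ⟨h1, h2⟩ := Finset.mem_Ico.1 hk
    have : idx k = j := hidxe j k h1 h2
    simp only [z, this, map_smul]
  rw [hblock] at hd
  have hbn := (hg j).2.2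
  have : (1 : ℝ) < ‖((j : ℝ) + 1)⁻¹ • ∑ k ∈ Finset.Ico (g j).1 (g (j+1)).1,
      T k ((g (j+1)).2 k)‖ := by
    rw [norm_smul, Real.norm_eq_abs, abs_of_pos (by positivity : (0:ℝ) < ((j:ℝ)+1)⁻¹)]
    have hjp : (0:ℝ) < (j:ℝ) + 1 := by positivity
    have h3 := mul_lt_mul_of_pos_left hbn (inv_pos.2 hjp)
    rwa [inv_mul_cancel₀ hjp.ne'] at h3
  linarith

/-- The weak summing operator `S : M^∞_{wR}(∑ T k) → Y`, sending `x` to the weak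
Riesz sum of `∑ T k x k`, is bounded (continuous) iff `∑ T k` is
`c₀(X)`-multiplier Cauchy. -/
theorem weak_summing_operator_continuous_iff_c0_multiplier_cauchy
    {X Y : Type*} [NormedAddCommGroup X] [NormedSpace ℝ X]
    [NormedAddCommGroup Y] [NormedSpace ℝ Y]
    (r : ℕ → ℝ) (hr0 : 0 < r 0) (hr : ∀ k, 0 ≤ r k)
    (hR : Tendsto (fun n => ∑ k ∈ Finset.range n, r k) atTop atTop)
    (T : ℕ → X →L[ℝ] Y) :
    (∃ C > 0, ∀ f : ℕ →ᵇ X, ∀ y0 : Y,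
        WeakRieszSeriesConvTo r (fun k => T k (f k)) y0 → ‖y0‖ ≤ C * ‖f‖) ↔
    (∀ x : ℕ → X, Tendsto x atTop (𝓝 0) →
        CauchySeq (fun n => ∑ k ∈ Finset.range n, T k (x k))) := by

  constructor
  · rintro ⟨C, hC, hbd⟩ x hx
    rw [Metric.cauchySeq_iff']
    intro ε hε
    set δ : ℝ := ε / (2 * C) with hδdef
    have hδ : 0 < δ := by positivity
    obtain ⟨N, hN⟩ := Metric.tendsto_atTop.1 hx δ hδ
    refine ⟨N, fun n hn => ?_⟩
    have hbound : ∀ k, ‖(if k ∈ Finset.Ico N n then x k else 0 : X)‖ ≤ δ := by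
      intro k
      split_ifs with h
      · have := hN k (Finset.mem_Ico.1 h).1
        rw [dist_eq_norm, sub_zero] at this
        exact this.le
      · simpa using hδ.le
    set f : ℕ →ᵇ X := BoundedContinuousFunction.ofNormedAddCommGroup
      (fun k => if k ∈ Finset.Ico N n then x k else 0)
      continuous_of_discreteTopology δ hbound with hfdef
    set v : Y := ∑ k ∈ Finset.Ico N n, T k (x k) with hv
    have hfe : ∀ k, f k = if k ∈ Finset.Ico N n then x k else 0 := fun k => by
      rw [hfdef, BoundedContinuousFunction.coe_ofNormedAddCommGroup]
    have hconst : ∀ k, n ≤ k + 1 → ∑ j ∈ Finset.range (k + 1), T j (f j) = v := by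
      intro k hk
      have hsub : Finset.Ico N n ⊆ Finset.range (k + 1) := by
        intro j hj
        rw [Finset.mem_range]
        exact lt_of_lt_of_le (Finset.mem_Ico.1 hj).2 hk
      rw [← Finset.sum_subset hsub (fun j _ hj => by rw [hfe j, if_neg hj, map_zero])]
      exact Finset.sum_congr rfl fun j hj => by rw [hfe j, if_pos hj]
    have hw : WeakRieszSeriesConvTo r (fun k => T k (f k)) v := by
      intro φ
      exact riesz_mean_const r hr0 hr hR
        (fun k => φ (∑ j ∈ Finset.range (k + 1), T j (f j))) (φ v) n
        (fun k hk => congrArg φ (hconst k (by omega)))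
    have hy := hbd f v hw
    have hfn : ‖f‖ ≤ δ :=
      BoundedContinuousFunction.norm_ofNormedAddCommGroup_le _ hδ.le _
    have hvb : ‖v‖ ≤ C * δ :=
      le_trans hy (mul_le_mul_of_nonneg_left hfn hC.le)
    have hdist : dist (∑ k ∈ Finset.range n, T k (x k))
        (∑ k ∈ Finset.range N, T k (x k)) = ‖v‖ := by
      rw [dist_eq_norm, hv, Finset.sum_Ico_eq_sub _ hn]
    rw [hdist]
    have : C * δ = ε / 2 := by
      rw [hδdef]; field_simp
    rw [this] at hvb
    linarith
  · intro hc
    obtain ⟨C, hC, hbd⟩ := uniform_bound T hc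
    have hscale : ∀ (n : ℕ) (x : ℕ → X) (M : ℝ), 0 ≤ M → (∀ k, ‖x k‖ ≤ M) →
        ‖∑ k ∈ Finset.range n, T k (x k)‖ ≤ C * M := by
      intro n x M hM0 hxM
      rcases eq_or_lt_of_le hM0 with hM | hM
      · have hx0 : ∀ k, x k = 0 := fun k =>
          norm_le_zero_iff.1 (le_of_le_of_eq (hxM k) hM.symm)
        simp [hx0, ← hM]
      · set x' : ℕ → X := fun k => M⁻¹ • x k with hx'
        have hx'1 : ∀ k, ‖x' k‖ ≤ 1 := by
          intro k
          rw [hx', norm_smul, Real.norm_eq_abs, abs_of_pos (inv_pos.2 hM)]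
          calc M⁻¹ * ‖x k‖ ≤ M⁻¹ * M :=
              mul_le_mul_of_nonneg_left (hxM k) (inv_pos.2 hM).le
            _ = 1 := inv_mul_cancel₀ hM.ne'
        have h1 := hbd n x' hx'1
        have h2 : ∑ k ∈ Finset.range n, T k (x' k)
            = M⁻¹ • ∑ k ∈ Finset.range n, T k (x k) := by
          rw [Finset.smul_sum]
          exact Finset.sum_congr rfl fun k _ => by rw [hx', map_smul]
        rw [h2, norm_smul, Real.norm_eq_abs, abs_of_pos (inv_pos.2 hM)] at h1
        calc ‖∑ k ∈ Finset.range n, T k (x k)‖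
            = M * (M⁻¹ * ‖∑ k ∈ Finset.range n, T k (x k)‖) := by
              rw [← mul_assoc, mul_inv_cancel₀ hM.ne', one_mul]
          _ ≤ M * C := mul_le_mul_of_nonneg_left h1 hM.le
          _ = C * M := mul_comm _ _
    refine ⟨C, hC, fun f y0 hw => ?_⟩
    refine norm_weak_limit_le r hr0 hr (fun k => T k (f k)) y0 (C * ‖f‖)
      (by positivity) (fun k => ?_) hw
    exact hscale (k + 1) (fun j => f j) ‖f‖ (norm_nonneg f)
      (fun j => f.norm_coe_le_norm j)
end
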